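/- For m ≥ 1, the coefficients a_n defined by (Σ_{n≥0} ([n]_q^!)^{m-1} t^n)^{-1} = 1 - Σ_{n≥1} a_n(q) t^n are polynomials in q with nonnegative integer coefficients. -/

import Mathlib

open PowerSeries Finset

/-- The `q`-factorial `[n]_q^! = ∏_{i=1}^n (1 + q + ⋯ + q^{i-1})` as a rational polynomial. -/
noncomputable def qFact (n : ℕ) : Polynomial ℚ :=
  ∏ i ∈ Finset.range n, ∑ j ∈ Finset.range (i + 1), Polynomial.X ^ j

namespace QFactAux

/-- "has nonnegative coefficients" -/
def NN (p : Polynomial ℚ) : Prop := ∀ k, 0 ≤ p.coeff k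

/-- "has integer coefficients" -/
def IP (p : Polynomial ℚ) : Prop := ∀ k, p.coeff k ∈ (⊥ : Subring ℚ)

/-- coefficientwise inequality -/
def CLE (p q : Polynomial ℚ) : Prop := ∀ k, p.coeff k ≤ q.coeff k

lemma NN.mul {p q : Polynomial ℚ} (hp : NN p) (hq : NN q) : NN (p * q) := by
  intro k
  rw [Polynomial.coeff_mul]
  exact Finset.sum_nonneg fun ij _ => mul_nonneg (hp _) (hq _)

lemma NN.one : NN (1 : Polynomial ℚ) := by
  intro k
  rw [Polynomial.coeff_one]
  split
  · exact zero_le_one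
  · exact le_rfl

lemma NN.pow {p : Polynomial ℚ} (hp : NN p) (e : ℕ) : NN (p ^ e) := by
  induction e with
  | zero => rw [pow_zero]; exact NN.one
  | succ e ih => rw [pow_succ]; exact ih.mul hp

lemma NN.sum {ι : Type*} {s : Finset ι} {g : ι → Polynomial ℚ}
    (h : ∀ i ∈ s, NN (g i)) : NN (∑ i ∈ s, g i) := by
  intro k
  rw [Polynomial.finset_sum_coeff]
  exact Finset.sum_nonneg fun i hi => h i hi k

lemma IP.one : IP (1 : Polynomial ℚ) := by
  intro k
  rw [Polynomial.coeff_one]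
  split
  · exact one_mem _
  · exact zero_mem _

lemma IP.mul {p q : Polynomial ℚ} (hp : IP p) (hq : IP q) : IP (p * q) := by
  intro k
  rw [Polynomial.coeff_mul]
  exact sum_mem fun ij _ => mul_mem (hp _) (hq _)

lemma IP.pow {p : Polynomial ℚ} (hp : IP p) (e : ℕ) : IP (p ^ e) := by
  induction e with
  | zero => rw [pow_zero]; exact IP.one
  | succ e ih => rw [pow_succ]; exact ih.mul hp

lemma IP.sum {ι : Type*} {s : Finset ι} {g : ι → Polynomial ℚ}
    (h : ∀ i ∈ s, IP (g i)) : IP (∑ i ∈ s, g i) := by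
  intro k
  rw [Polynomial.finset_sum_coeff]
  exact sum_mem fun i hi => h i hi k

lemma IP.sub {p q : Polynomial ℚ} (hp : IP p) (hq : IP q) : IP (p - q) := by
  intro k
  rw [Polynomial.coeff_sub]
  exact sub_mem (hp k) (hq k)

lemma IP.Xpow (j : ℕ) : IP ((Polynomial.X : Polynomial ℚ) ^ j) := by
  intro k
  rw [Polynomial.coeff_X_pow]
  split
  · exact one_mem _
  · exact zero_mem _

lemma CLE.mul {p p' q q' : Polynomial ℚ} (hp : NN p) (hq : NN q)
    (h1 : CLE p p') (h2 : CLE q q') : CLE (p * q) (p' * q') := by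
  intro k
  rw [Polynomial.coeff_mul, Polynomial.coeff_mul]
  refine Finset.sum_le_sum fun ij _ => ?_
  exact mul_le_mul (h1 _) (h2 _) (hq _) (le_trans (hp _) (h1 _))

lemma CLE.refl (p : Polynomial ℚ) : CLE p p := fun _ => le_rfl

lemma CLE.pow {p q : Polynomial ℚ} (hp : NN p) (h : CLE p q) (e : ℕ) :
    CLE (p ^ e) (q ^ e) := by
  induction e with
  | zero => rw [pow_zero, pow_zero]; exact CLE.refl 1
  | succ e ih => rw [pow_succ, pow_succ]; exact CLE.mul (hp.pow e) hp ih h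

/-- `[n]_q = 1 + q + ⋯ + q^{n-1}` -/
noncomputable def qNum (n : ℕ) : Polynomial ℚ := ∑ j ∈ Finset.range n, Polynomial.X ^ j

lemma NN_Xpow (j : ℕ) : NN ((Polynomial.X : Polynomial ℚ) ^ j) := by
  intro k
  rw [Polynomial.coeff_X_pow]
  split
  · exact zero_le_one
  · exact le_rfl

lemma NN_qNum (n : ℕ) : NN (qNum n) := NN.sum fun j _ => NN_Xpow j

lemma IP_qNum (n : ℕ) : IP (qNum n) := IP.sum fun j _ => IP.Xpow j

lemma CLE_qNum {b c : ℕ} (h : b ≤ c) : CLE (qNum b) (qNum c) := by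
  intro k
  rw [qNum, qNum, Polynomial.finset_sum_coeff, Polynomial.finset_sum_coeff]
  exact Finset.sum_le_sum_of_subset_of_nonneg (Finset.range_subset_range.mpr h)
    (fun j _ _ => NN_Xpow j k)

lemma qFact_eq (n : ℕ) : qFact n = ∏ i ∈ Finset.range n, qNum (i + 1) := rfl

lemma qFact_succ (n : ℕ) : qFact (n + 1) = qFact n * qNum (n + 1) := by
  rw [qFact_eq, qFact_eq, Finset.prod_range_succ]

lemma NN_qFact (n : ℕ) : NN (qFact n) := by
  induction n with
  | zero => rw [qFact_eq]; rw [Finset.range_zero, Finset.prod_empty]; exact NN.one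
  | succ n ih => rw [qFact_succ]; exact ih.mul (NN_qNum _)

lemma IP_qFact (n : ℕ) : IP (qFact n) := by
  induction n with
  | zero => rw [qFact_eq]; rw [Finset.range_zero, Finset.prod_empty]; exact IP.one
  | succ n ih => rw [qFact_succ]; exact ih.mul (IP_qNum _)

end QFactAux

open QFactAux in
/-- For `m ≥ 1`, the coefficients `a_n` defined by
`(Σ_{n≥0} ([n]_q^!)^{m-1} t^n)⁻¹ = 1 - Σ_{n≥1} a_n(q) t^n`
are polynomials in `q` with nonnegative integer coefficients. -/
theorem coeffs_of_inverse_qfactorial_series_nonneg (m : ℕ) (hm : 1 ≤ m)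
    (a : ℕ → Polynomial ℚ)
    (ha : (PowerSeries.mk fun n => (qFact n) ^ (m - 1)) *
      (1 - PowerSeries.mk fun n => if n = 0 then 0 else a n) = 1) :
    ∀ n : ℕ, 1 ≤ n → ∀ k : ℕ, ∃ c : ℕ, (a n).coeff k = (c : ℚ) := by
  set f : ℕ → Polynomial ℚ := fun n => (qFact n) ^ (m - 1) with hf
  have hf0 : f 0 = 1 := by simp [hf, qFact]
  have hNNf : ∀ n, NN (f n) := fun n => (NN_qFact n).pow _
  have hIPf : ∀ n, IP (f n) := fun n => (IP_qFact n).pow _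
  set A : PowerSeries (Polynomial ℚ) :=
    PowerSeries.mk fun n => if n = 0 then 0 else a n with hA
  -- coefficients of 1 - A
  have hc0 : (PowerSeries.coeff 0) (1 - A) = 1 := by
    simp [hA]
  have hcs : ∀ i : ℕ, (PowerSeries.coeff (i + 1)) (1 - A) = -(a (i + 1)) := by
    intro i
    simp [hA, PowerSeries.coeff_one]
  -- the basic recurrence
  have key : ∀ n : ℕ, 1 ≤ n → f n = ∑ i ∈ Finset.range n, a (i + 1) * f (n - 1 - i) := by
    intro n hn
    have h := congrArg (PowerSeries.coeff n) ((mul_comm _ _).trans ha)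
    rw [PowerSeries.coeff_one, if_neg (by omega), PowerSeries.coeff_mul,
      Finset.Nat.sum_antidiagonal_eq_sum_range_succ_mk, Finset.sum_range_succ'] at h
    simp only [PowerSeries.coeff_mk, hc0, hcs] at h
    -- h : ∑ i ∈ range n, -(a (i+1)) * f (n - (i+1)) + 1 * f (n - 0) = 0
    have h2 : (∑ i ∈ Finset.range n, -(a (i + 1) * f (n - 1 - i))) + f n = 0 := by
      rw [← h]
      congr 1
      · exact Finset.sum_congr rfl fun i _ => by
          rw [neg_mul]
          congr 3
          omega
      · rw [Nat.sub_zero, one_mul]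
    rw [Finset.sum_neg_distrib, neg_add_eq_zero] at h2
    exact h2.symm
  -- main induction
  suffices H : ∀ n : ℕ, 1 ≤ n → NN (a n) ∧ IP (a n) by
    intro n hn k
    obtain ⟨h1, h2⟩ := H n hn
    obtain ⟨z, hz⟩ := Subring.mem_bot.mp (h2 k)
    have hz0 : 0 ≤ z := by
      have := h1 k
      rw [← hz] at this
      exact_mod_cast this
    exact ⟨z.toNat, by rw [← hz]; norm_cast; omega⟩
  intro n
  induction n using Nat.strong_induction_on with
  | _ n IH =>
    intro hn
    -- the recurrence solved for `a n`
    have hrec : a n = f n - ∑ i ∈ Finset.range (n - 1), a (i + 1) * f (n - 1 - i) := by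
      have h := key n hn
      have hsplit : ∑ i ∈ Finset.range n, a (i + 1) * f (n - 1 - i)
          = (∑ i ∈ Finset.range (n - 1), a (i + 1) * f (n - 1 - i))
            + a n * f (n - 1 - (n - 1)) := by
        have : n = (n - 1) + 1 := by omega
        rw [this, Finset.sum_range_succ]
        congr 3 <;> omega
      rw [hsplit] at h
      rw [Nat.sub_self, hf0, mul_one] at h
      rw [h]
      ring
    have hNNa : ∀ i ∈ Finset.range (n - 1), NN (a (i + 1)) :=
      fun i hi => (IH (i + 1) (by simp at hi; omega) (by omega)).1
    have hIPa : ∀ i ∈ Finset.range (n - 1), IP (a (i + 1)) :=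
      fun i hi => (IH (i + 1) (by simp at hi; omega) (by omega)).2
    constructor
    · -- nonnegativity
      intro k
      rw [hrec, Polynomial.coeff_sub, sub_nonneg]
      -- coefficientwise bound : sum ≤ f n
      have bound : CLE (∑ i ∈ Finset.range (n - 1), a (i + 1) * f (n - 1 - i)) (f n) := by
        set r : Polynomial ℚ := (qNum n) ^ (m - 1) with hr
        have hstep : CLE (∑ i ∈ Finset.range (n - 1), a (i + 1) * f (n - 1 - i))
            ((∑ i ∈ Finset.range (n - 1), a (i + 1) * f (n - 1 - 1 - i)) * r) := by
          rw [Finset.sum_mul]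
          intro k
          rw [Polynomial.finset_sum_coeff, Polynomial.finset_sum_coeff]
          refine Finset.sum_le_sum fun i hi => ?_
          have hi' : i < n - 1 := Finset.mem_range.mp hi
          have hfle : CLE (f (n - 1 - i)) (f (n - 1 - 1 - i) * r) := by
            have hs : n - 1 - i = (n - 1 - 1 - i) + 1 := by omega
            have : f (n - 1 - i) = f (n - 1 - 1 - i) * (qNum (n - 1 - i)) ^ (m - 1) := by
              rw [hf]
              show qFact (n-1-i) ^ (m-1) = qFact (n-1-1-i) ^ (m-1) * (qNum (n-1-i)) ^ (m-1)
              rw [← mul_pow]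
              congr 1
              rw [hs, qFact_succ, ← hs]
            rw [this]
            exact CLE.mul ((NN_qFact _).pow _) ((NN_qNum _).pow _) (CLE.refl _)
              (CLE.pow (NN_qNum _) (CLE_qNum (by omega)) _)
          rw [mul_assoc]
          exact CLE.mul (hNNa i hi) (hNNf _) (CLE.refl _) hfle k
        refine fun k => le_trans (hstep k) ?_
        rcases Nat.lt_or_ge n 2 with h2 | h2
        · -- n = 1 : empty sum
          have hn1 : n = 1 := by omega
          subst hn1
          simp only [Nat.sub_self, Finset.range_zero, Finset.sum_empty, zero_mul]
          exact hNNf 1 k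
        · -- n ≥ 2 : use the recurrence at n - 1
          have hk := key (n - 1) (by omega)
          have : (∑ i ∈ Finset.range (n - 1), a (i + 1) * f (n - 1 - 1 - i)) = f (n - 1) :=
            hk.symm
          rw [this]
          have hfn : f n = f (n - 1) * r := by
            rw [hf, hr]
            show qFact n ^ (m-1) = qFact (n-1) ^ (m-1) * (qNum n) ^ (m-1)
            rw [← mul_pow]
            congr 1
            have : n = (n - 1) + 1 := by omega
            rw [this, qFact_succ, ← this]
          rw [hfn]
      exact bound k
    · -- integrality
      rw [hrec]
      exact IP.sub (hIPf n) (IP.sum fun i hi => (hIPa i hi).mul (hIPf _))
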